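/- Day convolution of small presheaves is small: if (A, ⊗) is a monoidal locally small category and F, G are small presheaves on A, then the Day convolution F ⊗_Day G, defined by the coend (F ⊗_Day G)(c) = ∫^{a,b} A(c, a ⊗ b) × F(a) × G(b), is again a small presheaf on A. -/

import Mathlib

open CategoryTheory Opposite Limits MonoidalCategory

universe v u

/-- A presheaf on a locally small category `C` is small if it is a small colimit of
representables. -/
def IsSmallPresheaf {C : Type u} [Category.{v} C] (F : Cᵒᵖ ⥤ Type v) : Prop :=
  ∃ (J : Cat.{v, v}) (D : J ⥤ C) (c : Cocone (D ⋙ yoneda)),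
    Nonempty (IsColimit c) ∧ Nonempty (c.pt ≅ F)

variable {A : Type u} [Category.{v} A]

/-- The external product `F × G : (A × A)ᵒᵖ ⥤ Type` of two presheaves. -/
def extProd (X Y : Aᵒᵖ ⥤ Type v) : (A × A)ᵒᵖ ⥤ Type v where
  obj p := X.obj (op p.unop.1) × Y.obj (op p.unop.2)
  map {p q} f := TypeCat.ofHom fun z => (X.map (f.unop.1.op) z.1, Y.map (f.unop.2.op) z.2)
  map_id p := by ext z <;> simp [CategoryTheory.unop_id]
  map_comp f g := by ext z <;> simp

variable [MonoidalCategory A]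

/-- The tensor product functor `⊗ : A × A ⥤ A` of a monoidal category. -/
def tensorF : A × A ⥤ A where
  obj p := p.1 ⊗ p.2
  map f := MonoidalCategory.tensorHom f.1 f.2
  map_id p := MonoidalCategory.id_tensorHom_id p.1 p.2
  map_comp f g := (MonoidalCategory.tensorHom_comp_tensorHom f.1 f.2 g.1 g.2).symm

namespace DaySmallAux

lemma yon_app {X : A} {P : Aᵒᵖ ⥤ Type v} (τ : yoneda.obj X ⟶ P) {a : A} (f : a ⟶ X) :
    τ.app (op a) f = P.map f.op (τ.app (op X) (𝟙 X)) := by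
  have := types_congr_hom (τ.naturality f.op) (𝟙 X)
  simpa using this

variable {J₁ : Type v} [Category.{v} J₁] {J₂ : Type v} [Category.{v} J₂]

section OneVar

variable (D₁ : J₁ ⥤ A) (cF : Cocone (D₁ ⋙ yoneda))

/-- The canonical element of `cF.pt (D₁ j)`. -/
def elt (j : J₁) : cF.pt.obj (op (D₁.obj j)) :=
  (cF.ι.app j).app (op (D₁.obj j)) (𝟙 _)

lemma elt_app {j : J₁} {a : A} (f : a ⟶ D₁.obj j) :
    (cF.ι.app j).app (op a) f = cF.pt.map f.op (elt D₁ cF j) :=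
  yon_app _ f

lemma elt_nat {j j' : J₁} (φ : j ⟶ j') :
    cF.pt.map (D₁.map φ).op (elt D₁ cF j') = elt D₁ cF j := by
  have h := types_congr_hom (NatTrans.congr_app (cF.w φ) (op (D₁.obj j))) (𝟙 _)
  have h' : (cF.ι.app j').app (op (D₁.obj j)) (𝟙 _ ≫ D₁.map φ) = elt D₁ cF j := h
  rw [Category.id_comp, elt_app] at h'
  exact h'

lemma elt_jointly (hcF : IsColimit cF) {a : A} (u : cF.pt.obj (op a)) :
    ∃ (j : J₁) (f : a ⟶ D₁.obj j), cF.pt.map f.op (elt D₁ cF j) = u := by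
  obtain ⟨j, f, hf⟩ := Types.jointly_surjective _
    (isColimitOfPreserves ((evaluation Aᵒᵖ (Type v)).obj (op a)) hcF) u
  exact ⟨j, f, by rw [← elt_app]; exact hf⟩

end OneVar

section Main

variable (D₁ : J₁ ⥤ A) (D₂ : J₂ ⥤ A)
  (cF : Cocone (D₁ ⋙ yoneda)) (cG : Cocone (D₂ ⋙ yoneda))

section Cocones

variable (s : Cocone ((D₁.prod D₂ ⋙ tensorF) ⋙ yoneda))

/-- The canonical element of `s.pt (D₁ j ⊗ D₂ k)`. -/
def selt (j : J₁) (k : J₂) : s.pt.obj (op (D₁.obj j ⊗ D₂.obj k)) :=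
  (s.ι.app (j, k)).app (op (D₁.obj j ⊗ D₂.obj k)) (𝟙 _)

lemma selt_app {j : J₁} {k : J₂} {a : A} (f : a ⟶ D₁.obj j ⊗ D₂.obj k) :
    (s.ι.app (j, k)).app (op a) f = s.pt.map f.op (selt D₁ D₂ s j k) :=
  yon_app _ f

lemma selt_nat {j j' : J₁} {k k' : J₂} (φ : j ⟶ j') (ψ : k ⟶ k') :
    s.pt.map (D₁.map φ ⊗ₘ D₂.map ψ).op (selt D₁ D₂ s j' k') = selt D₁ D₂ s j k := by
  have h := types_congr_hom (NatTrans.congr_app (s.w ((φ, ψ) : (j, k) ⟶ (j', k')))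
    (op (D₁.obj j ⊗ D₂.obj k))) (𝟙 _)
  have h' : (s.ι.app (j', k')).app (op (D₁.obj j ⊗ D₂.obj k))
      (𝟙 _ ≫ (D₁.map φ ⊗ₘ D₂.map ψ)) = selt D₁ D₂ s j k := h
  erw [Category.id_comp, selt_app] at h'
  exact h'

/-- The inner cocone, describing the map `G(b) → s.pt (a ⊗ b)` attached to `f : a ⟶ D₁ j`. -/
def innerCocone (a b : A) (j : J₁) (f : a ⟶ D₁.obj j) :
    Cocone ((D₂ ⋙ yoneda) ⋙ (evaluation Aᵒᵖ (Type v)).obj (op b)) where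
  pt := s.pt.obj (op (a ⊗ b))
  ι :=
    { app := fun k => TypeCat.ofHom fun (g : b ⟶ D₂.obj k) => s.pt.map (f ⊗ₘ g).op (selt D₁ D₂ s j k)
      naturality := by
        intro k k' ψ
        ext g
        have h1 := selt_nat D₁ D₂ s (𝟙 j) ψ
        rw [CategoryTheory.Functor.map_id] at h1
        show s.pt.map (f ⊗ₘ (g ≫ D₂.map ψ)).op (selt D₁ D₂ s j k') =
          s.pt.map (f ⊗ₘ g).op (selt D₁ D₂ s j k)
        rw [← h1, ← FunctorToTypes.map_comp_apply, ← op_comp,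
          MonoidalCategory.tensorHom_comp_tensorHom, Category.comp_id] }

variable (hcG : IsColimit cG)

/-- The map `G(b) → s.pt (a ⊗ b)` attached to `f : a ⟶ D₁ j`. -/
noncomputable def innerDesc (a b : A) (j : J₁) (f : a ⟶ D₁.obj j) :
    cG.pt.obj (op b) → s.pt.obj (op (a ⊗ b)) :=
  (isColimitOfPreserves ((evaluation Aᵒᵖ (Type v)).obj (op b)) hcG).desc
    (innerCocone D₁ D₂ s a b j f)

lemma innerDesc_fac (a b : A) (j : J₁) (f : a ⟶ D₁.obj j) (k : J₂) (g : b ⟶ D₂.obj k) :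
    innerDesc D₁ D₂ cG s hcG a b j f (cG.pt.map g.op (elt D₂ cG k)) =
      s.pt.map (f ⊗ₘ g).op (selt D₁ D₂ s j k) := by
  have h := types_congr_hom ((isColimitOfPreserves ((evaluation Aᵒᵖ (Type v)).obj (op b)) hcG).fac
    (innerCocone D₁ D₂ s a b j f) k) g
  have h' : innerDesc D₁ D₂ cG s hcG a b j f ((cG.ι.app k).app (op b) g) =
      s.pt.map (f ⊗ₘ g).op (selt D₁ D₂ s j k) := h
  rw [elt_app] at h'
  exact h'

/-- The outer cocone, describing the map `F(a) → (G(b) → s.pt (a ⊗ b))`. -/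
noncomputable def outerCocone (a b : A) :
    Cocone ((D₁ ⋙ yoneda) ⋙ (evaluation Aᵒᵖ (Type v)).obj (op a)) where
  pt := cG.pt.obj (op b) → s.pt.obj (op (a ⊗ b))
  ι :=
    { app := fun j => TypeCat.ofHom fun (f : a ⟶ D₁.obj j) => innerDesc D₁ D₂ cG s hcG a b j f
      naturality := by
        intro j j' φ
        ext f
        show innerDesc D₁ D₂ cG s hcG a b j' (f ≫ D₁.map φ) = innerDesc D₁ D₂ cG s hcG a b j f
        unfold innerDesc
        congr 2
        apply (isColimitOfPreserves ((evaluation Aᵒᵖ (Type v)).obj (op b)) hcG).hom_ext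
        intro k
        ext g
        show innerDesc D₁ D₂ cG s hcG a b j' (f ≫ D₁.map φ) ((cG.ι.app k).app (op b) g) =
          innerDesc D₁ D₂ cG s hcG a b j f ((cG.ι.app k).app (op b) g)
        rw [elt_app D₂ cG g, innerDesc_fac, innerDesc_fac]
        have h1 := selt_nat D₁ D₂ s φ (𝟙 k)
        rw [CategoryTheory.Functor.map_id] at h1
        rw [← h1, ← FunctorToTypes.map_comp_apply, ← op_comp,
          MonoidalCategory.tensorHom_comp_tensorHom, Category.comp_id] }

variable (hcF : IsColimit cF)

/-- The two-variable descent map `F(a) → G(b) → s.pt (a ⊗ b)`. -/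
noncomputable def desc₂ (a b : A) :
    cF.pt.obj (op a) → cG.pt.obj (op b) → s.pt.obj (op (a ⊗ b)) :=
  (isColimitOfPreserves ((evaluation Aᵒᵖ (Type v)).obj (op a)) hcF).desc
    (outerCocone D₁ D₂ cG s hcG a b)

lemma desc₂_fac (a b : A) (j : J₁) (f : a ⟶ D₁.obj j) (k : J₂) (g : b ⟶ D₂.obj k) :
    desc₂ D₁ D₂ cF cG s hcG hcF a b (cF.pt.map f.op (elt D₁ cF j))
      (cG.pt.map g.op (elt D₂ cG k)) = s.pt.map (f ⊗ₘ g).op (selt D₁ D₂ s j k) := by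
  have h := types_congr_hom ((isColimitOfPreserves ((evaluation Aᵒᵖ (Type v)).obj (op a)) hcF).fac
    (outerCocone D₁ D₂ cG s hcG a b) j) f
  have h' : desc₂ D₁ D₂ cF cG s hcG hcF a b (cF.pt.map f.op (elt D₁ cF j)) =
      innerDesc D₁ D₂ cG s hcG a b j f := by
    rw [← elt_app D₁ cF f]; exact h
  rw [h', innerDesc_fac]

/-- The natural transformation `extProd F G ⟶ tensorF.op ⋙ s.pt` induced by a cocone `s`. -/
noncomputable def betaOfCocone : extProd cF.pt cG.pt ⟶ (tensorF (A := A)).op ⋙ s.pt where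
  app p := TypeCat.ofHom fun uv => desc₂ D₁ D₂ cF cG s hcG hcF p.unop.1 p.unop.2 uv.1 uv.2
  naturality := by
    intro p q m
    ext uv
    obtain ⟨u, v⟩ := uv
    obtain ⟨j, f, rfl⟩ := elt_jointly D₁ cF hcF u
    obtain ⟨k, g, rfl⟩ := elt_jointly D₂ cG hcG v
    show desc₂ D₁ D₂ cF cG s hcG hcF q.unop.1 q.unop.2
        (cF.pt.map m.unop.1.op (cF.pt.map f.op (elt D₁ cF j)))
        (cG.pt.map m.unop.2.op (cG.pt.map g.op (elt D₂ cG k))) =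
      s.pt.map (tensorF.map m.unop).op
        (desc₂ D₁ D₂ cF cG s hcG hcF p.unop.1 p.unop.2
          (cF.pt.map f.op (elt D₁ cF j)) (cG.pt.map g.op (elt D₂ cG k)))
    rw [← FunctorToTypes.map_comp_apply, ← FunctorToTypes.map_comp_apply,
      ← op_comp, ← op_comp, desc₂_fac, desc₂_fac]
    erw [← FunctorToTypes.map_comp_apply, ← op_comp]
    have h3 : (m.unop.1 ≫ f) ⊗ₘ (m.unop.2 ≫ g) = tensorF.map m.unop ≫ (f ⊗ₘ g) :=
      (MonoidalCategory.tensorHom_comp_tensorHom _ _ _ _).symm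
    rw [h3]
    rfl

end Cocones

variable (D : Aᵒᵖ ⥤ Type v) (α : extProd cF.pt cG.pt ⟶ (tensorF (A := A)).op ⋙ D)

/-- The canonical element of `D (D₁ j ⊗ D₂ k)`. -/
def dd (j : J₁) (k : J₂) : D.obj (op (D₁.obj j ⊗ D₂.obj k)) :=
  α.app (op (D₁.obj j, D₂.obj k)) (elt D₁ cF j, elt D₂ cG k)

lemma α_apply {a b : A} {j : J₁} {k : J₂} (f : a ⟶ D₁.obj j) (g : b ⟶ D₂.obj k) :
    α.app (op (a, b)) (cF.pt.map f.op (elt D₁ cF j), cG.pt.map g.op (elt D₂ cG k)) =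
      D.map (f ⊗ₘ g).op (dd D₁ D₂ cF cG D α j k) := by
  exact types_congr_hom
    (α.naturality (Quiver.Hom.op ((f, g) : ((a, b) : A × A) ⟶ (D₁.obj j, D₂.obj k))))
    (elt D₁ cF j, elt D₂ cG k)

lemma dd_nat {j j' : J₁} {k k' : J₂} (φ : j ⟶ j') (ψ : k ⟶ k') :
    D.map (D₁.map φ ⊗ₘ D₂.map ψ).op (dd D₁ D₂ cF cG D α j' k') = dd D₁ D₂ cF cG D α j k := by
  have h := α_apply D₁ D₂ cF cG D α (D₁.map φ) (D₂.map ψ) (j := j') (k := k')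
  rw [elt_nat, elt_nat] at h
  exact h.symm

/-- The candidate colimit cocone over `(j, k) ↦ yoneda (D₁ j ⊗ D₂ k)` with point `D`. -/
def theCocone : Cocone ((D₁.prod D₂ ⋙ tensorF) ⋙ yoneda) where
  pt := D
  ι :=
    { app := fun jk =>
        { app := fun a => TypeCat.ofHom fun (f : a.unop ⟶ D₁.obj jk.1 ⊗ D₂.obj jk.2) =>
            D.map f.op (dd D₁ D₂ cF cG D α jk.1 jk.2)
          naturality := by
            intro a a' m
            ext f
            show D.map (m.unop ≫ f).op (dd D₁ D₂ cF cG D α jk.1 jk.2) =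
              D.map m (D.map f.op (dd D₁ D₂ cF cG D α jk.1 jk.2))
            erw [op_comp, FunctorToTypes.map_comp_apply]
            rfl }
      naturality := by
        intro jk jk' φψ
        apply NatTrans.ext
        ext a f
        show D.map (f ≫ (D₁.map φψ.1 ⊗ₘ D₂.map φψ.2)).op
            (dd D₁ D₂ cF cG D α jk'.1 jk'.2) =
          D.map f.op (dd D₁ D₂ cF cG D α jk.1 jk.2)
        erw [op_comp, FunctorToTypes.map_comp_apply, dd_nat] }

variable [D.IsLeftKanExtension α] (hcF : IsColimit cF) (hcG : IsColimit cG)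

lemma compat_eq_beta (s : Cocone ((D₁.prod D₂ ⋙ tensorF) ⋙ yoneda)) (m : D ⟶ s.pt)
    (hm : ∀ jk, (theCocone D₁ D₂ cF cG D α).ι.app jk ≫ m = s.ι.app jk) :
    α ≫ Functor.whiskerLeft (tensorF (A := A)).op m = betaOfCocone D₁ D₂ cF cG s hcG hcF := by
  have hmd : ∀ (j : J₁) (k : J₂),
      m.app (op (D₁.obj j ⊗ D₂.obj k)) (dd D₁ D₂ cF cG D α j k) = selt D₁ D₂ s j k := by
    intro j k
    have h := types_congr_hom (NatTrans.congr_app (hm (j, k)) (op (D₁.obj j ⊗ D₂.obj k))) (𝟙 _)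
    have h' : m.app (op (D₁.obj j ⊗ D₂.obj k))
        (D.map (𝟙 (D₁.obj j ⊗ D₂.obj k)).op (dd D₁ D₂ cF cG D α j k)) =
      selt D₁ D₂ s j k := h
    simpa only [op_id, CategoryTheory.Functor.map_id, types_id_apply] using h'
  apply NatTrans.ext
  ext p uv
  obtain ⟨u, v⟩ := uv
  obtain ⟨j, f, rfl⟩ := elt_jointly D₁ cF hcF u
  obtain ⟨k, g, rfl⟩ := elt_jointly D₂ cG hcG v
  show m.app (op (p.unop.1 ⊗ p.unop.2))
      (α.app (op (p.unop.1, p.unop.2))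
        (cF.pt.map f.op (elt D₁ cF j), cG.pt.map g.op (elt D₂ cG k))) =
    desc₂ D₁ D₂ cF cG s hcG hcF p.unop.1 p.unop.2
      (cF.pt.map f.op (elt D₁ cF j)) (cG.pt.map g.op (elt D₂ cG k))
  have hα : α.app (op (p.unop.1, p.unop.2))
      (cF.pt.map f.op (elt D₁ cF j), cG.pt.map g.op (elt D₂ cG k)) =
      D.map (f ⊗ₘ g).op (dd D₁ D₂ cF cG D α j k) :=
    α_apply D₁ D₂ cF cG D α f g
  rw [hα, desc₂_fac]
  have hnat := types_congr_hom (m.naturality (f ⊗ₘ g).op) (dd D₁ D₂ cF cG D α j k)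
  exact hnat.trans (congrArg _ (hmd j k))

/-- The cocone `theCocone` is a colimit. -/
noncomputable def theIsColimit : IsColimit (theCocone D₁ D₂ cF cG D α) where
  desc s := D.descOfIsLeftKanExtension α s.pt (betaOfCocone D₁ D₂ cF cG s hcG hcF)
  fac := by
    intro s jk
    obtain ⟨j, k⟩ := jk
    apply NatTrans.ext
    ext a f
    set dsc := D.descOfIsLeftKanExtension α s.pt (betaOfCocone D₁ D₂ cF cG s hcG hcF)
    show dsc.app a (D.map f.op (dd D₁ D₂ cF cG D α j k)) = (s.ι.app (j, k)).app a f
    have hdd : dsc.app (op (D₁.obj j ⊗ D₂.obj k)) (dd D₁ D₂ cF cG D α j k) =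
        selt D₁ D₂ s j k := by
      have h := types_congr_hom (D.descOfIsLeftKanExtension_fac_app α s.pt
        (betaOfCocone D₁ D₂ cF cG s hcG hcF) (op (D₁.obj j, D₂.obj k)))
        (elt D₁ cF j, elt D₂ cG k)
      have h2 := desc₂_fac D₁ D₂ cF cG s hcG hcF (D₁.obj j) (D₂.obj k)
        j (𝟙 _) k (𝟙 _)
      simp only [FunctorToTypes.map_id_apply, op_id, CategoryTheory.Functor.map_id,
        MonoidalCategory.id_tensorHom_id, types_id_apply] at h2
      exact h.trans h2
    have hnat := types_congr_hom (dsc.naturality f.op) (dd D₁ D₂ cF cG D α j k)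
    rw [show dsc.app a (D.map f.op (dd D₁ D₂ cF cG D α j k)) =
        s.pt.map f.op (dsc.app (op (D₁.obj j ⊗ D₂.obj k)) (dd D₁ D₂ cF cG D α j k)) from hnat,
      hdd]
    erw [← selt_app]
  uniq := by
    intro s m hm
    apply D.hom_ext_of_isLeftKanExtension α
    rw [compat_eq_beta D₁ D₂ cF cG D α hcF hcG s m hm]
    exact (D.descOfIsLeftKanExtension_fac α s.pt (betaOfCocone D₁ D₂ cF cG s hcG hcF)).symm

lemma aux [Da : D.IsLeftKanExtension α] (hcF : IsColimit cF) (hcG : IsColimit cG) :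
    IsSmallPresheaf D :=
  ⟨Cat.of (J₁ × J₂), D₁.prod D₂ ⋙ tensorF, theCocone D₁ D₂ cF cG D α,
    ⟨theIsColimit D₁ D₂ cF cG D α hcF hcG⟩, ⟨Iso.refl _⟩⟩

end Main

end DaySmallAux

/-- Day convolution of small presheaves is small: if `D` is the Day convolution `F ⊗_Day G`
(characterized as the left Kan extension of the external product `F × G` along `(⊗)ᵒᵖ`),
and `F` and `G` are small presheaves on the monoidal locally small category `A`, then `D`
is a small presheaf. -/
theorem isSmallPresheaf_day_convolution (F G : Aᵒᵖ ⥤ Type v) (D : Aᵒᵖ ⥤ Type v)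
    (α : extProd F G ⟶ (tensorF (A := A)).op ⋙ D)
    (h : D.IsLeftKanExtension α)
    (hF : IsSmallPresheaf F) (hG : IsSmallPresheaf G) :
    IsSmallPresheaf D := by
  obtain ⟨J₁, D₁, c₁, ⟨h₁⟩, ⟨e₁⟩⟩ := hF
  obtain ⟨J₂, D₂, c₂, ⟨h₂⟩, ⟨e₂⟩⟩ := hG
  let cF : Cocone (D₁ ⋙ yoneda) := ⟨F, c₁.ι ≫ (Functor.const J₁).map e₁.hom⟩
  let cG : Cocone (D₂ ⋙ yoneda) := ⟨G, c₂.ι ≫ (Functor.const J₂).map e₂.hom⟩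
  have hcF : IsColimit cF := h₁.ofIsoColimit (Cocones.ext e₁ (fun j => rfl))
  have hcG : IsColimit cG := h₂.ofIsoColimit (Cocones.ext e₂ (fun j => rfl))
  exact DaySmallAux.aux D₁ D₂ cF cG D α hcF hcG
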